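/- Let A be a ring and I a two-sided idempotent ideal of A. Then the following are equivalent: (1) for every integer n > 0 and every right ideal 𝔞 of the matrix ring Mₙ(A) that is Mₙ(I)-saturated (i.e., for x ∈ Mₙ(A), x·Mₙ(I) ⊆ 𝔞 implies x ∈ 𝔞), there exists x ∈ 𝔞 with (1ₙ − x)·𝔞 ⊆ Mₙ(I); (2) for every integer n > 0 and every I-saturated submodule K of the free right A-module Aⁿ (i.e., for x ∈ Aⁿ, x·I ⊆ K implies x ∈ K), the quotient Aⁿ/(K + Iⁿ) is projective as a right A/I-module, where Iⁿ denotes the submodule of n-tuples with all entries in I. -/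

import Mathlib

open MulOpposite

variable (A : Type) [Ring A]

/-- The ring congruence attached to a two-sided ideal `I` of `A`; its quotient is the
quotient ring `A/I`. -/
def idealCon (I : Ideal A) (hright : ∀ a ∈ I, ∀ b : A, a * b ∈ I) : RingCon A where
  r a b := a - b ∈ I
  iseqv := by
    refine ⟨fun a => by simpa using I.zero_mem, fun {a b} h => ?_, fun {a b c} h h' => ?_⟩
    · have := I.neg_mem h
      rwa [neg_sub] at this
    · have := I.add_mem h h'
      rwa [sub_add_sub_cancel] at this
  mul' := by
    intro w x y z h h'
    show w * y - x * z ∈ I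
    have h1 : (w - x) * y ∈ I := hright _ h y
    have h2 : x * (y - z) ∈ I := by simpa [smul_eq_mul] using I.smul_mem x h'
    have h3 := I.add_mem h1 h2
    have heq : (w - x) * y + x * (y - z) = w * y - x * z := by noncomm_ring
    rwa [heq] at h3
  add' := by
    intro w x y z h h'
    show w + y - (x + z) ∈ I
    have h3 := I.add_mem h h'
    have heq : w - x + (y - z) = w + y - (x + z) := by abel
    rwa [heq] at h3

section Aux13
variable {A}
variable (I : Ideal A) (hright : ∀ a ∈ I, ∀ b : A, a * b ∈ I)



noncomputable def qh : A →+* (idealCon A I hright).Quotient := RingCon.mk' _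

lemma qh_eq_iff {a b : A} : qh I hright a = qh I hright b ↔ a - b ∈ I :=
  (idealCon A I hright).eq

lemma qh_surj : Function.Surjective (qh I hright) := fun x => Quot.inductionOn x fun a => ⟨a, rfl⟩




variable (S : Type) [Ring S] (n : ℕ)

/-- `Fin n → S` with its right `S`-module structure is `Sᵐᵒᵖ`-linearly equivalent to the
standard left module `Fin n → Sᵐᵒᵖ`. -/
def opPiEquiv : (Fin n → S) ≃ₗ[Sᵐᵒᵖ] (Fin n → Sᵐᵒᵖ) where
  toFun v := fun i => op (v i)
  invFun w := fun i => unop (w i)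
  left_inv v := by funext i; simp
  right_inv w := by funext i; simp
  map_add' v w := by funext i; simp
  map_smul' r v := by
    funext i
    simp [MulOpposite.smul_eq_mul_unop]

instance : Module.Projective Sᵐᵒᵖ (Fin n → S) :=
  Module.Projective.of_equiv (opPiEquiv S n).symm





variable (I : Ideal A) (hright : ∀ a ∈ I, ∀ b : A, a * b ∈ I)

/-- The image of `K` in `(A/I)ⁿ`. -/
def Kset (n : ℕ) (K : Submodule Aᵐᵒᵖ (Fin n → A)) : Set (Fin n → (idealCon A I hright).Quotient) :=
  {y | ∃ x ∈ K, y = fun i => RingCon.mk' (idealCon A I hright) (x i)}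

/-- The image of `K` in `(A/I)ⁿ` as a submodule. -/
def Ksub (n : ℕ) (K : Submodule Aᵐᵒᵖ (Fin n → A)) :
    Submodule (idealCon A I hright).Quotientᵐᵒᵖ (Fin n → (idealCon A I hright).Quotient) where
  carrier := Kset I hright n K
  zero_mem' := ⟨0, K.zero_mem, by funext i; simp⟩
  add_mem' := by
    rintro y z ⟨v, hv, rfl⟩ ⟨w, hw, rfl⟩
    exact ⟨v + w, K.add_mem hv hw, by funext i; simp⟩
  smul_mem' := by
    intro r y hy
    obtain ⟨v, hv, rfl⟩ := hy
    obtain ⟨a, ha⟩ := qh_surj I hright (unop r)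
    refine ⟨op a • v, K.smul_mem (op a) hv, ?_⟩
    funext i
    have : r = op (qh I hright a) := by rw [ha, op_unop]
    simp only [this, Pi.smul_apply, op_smul_eq_mul]
    show qh I hright (v i) * qh I hright a = qh I hright ((op a • v) i)
    rw [← map_mul]
    rfl

lemma span_Kset (n : ℕ) (K : Submodule Aᵐᵒᵖ (Fin n → A)) :
    Submodule.span (idealCon A I hright).Quotientᵐᵒᵖ (Kset I hright n K) = Ksub I hright n K :=
  le_antisymm (Submodule.span_le.2 fun y hy => hy) Submodule.subset_span





variable (I : Ideal A) (hright : ∀ a ∈ I, ∀ b : A, a * b ∈ I)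

/-- The endomorphism of right multiplication ... mulVec of a matrix over the quotient ring -/
noncomputable def mulVecLin' (n : ℕ) (e : Matrix (Fin n) (Fin n) (idealCon A I hright).Quotient) :
    (Fin n → (idealCon A I hright).Quotient) →ₗ[(idealCon A I hright).Quotientᵐᵒᵖ]
      (Fin n → (idealCon A I hright).Quotient) where
  toFun w := e.mulVec w
  map_add' := Matrix.mulVec_add e
  map_smul' r w := by
    funext i
    simp [Matrix.mulVec, dotProduct, MulOpposite.smul_eq_mul_unop, Finset.sum_mul,
      mul_assoc]

theorem key (n : ℕ) (K : Submodule Aᵐᵒᵖ (Fin n → A)) :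
    (∃ x : Matrix (Fin n) (Fin n) A, (∀ k, (fun i => x i k) ∈ K) ∧
        ∀ v ∈ K, ∀ i, v i - x.mulVec v i ∈ I) ↔
    Module.Projective (idealCon A I hright).Quotientᵐᵒᵖ
      ((Fin n → (idealCon A I hright).Quotient) ⧸
        Submodule.span (idealCon A I hright).Quotientᵐᵒᵖ (Kset I hright n K)) := by
  constructor
  · rintro ⟨x, hcol, hfix⟩
    set p := Submodule.span (idealCon A I hright).Quotientᵐᵒᵖ (Kset I hright n K) with hp
    set φ := mulVecLin' I hright n (Matrix.of fun i j => qh I hright (x i j)) with hφ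
    have hφfix : ∀ y ∈ p, φ y = y := by
      intro y hy
      have hle : p ≤ LinearMap.eqLocus φ LinearMap.id := by
        rw [hp]
        refine Submodule.span_le.2 ?_
        rintro y ⟨v, hv, rfl⟩
        show φ _ = _
        funext i
        show ∑ k, qh I hright (x i k) * qh I hright (v k) = qh I hright (v i)
        rw [show ∑ k, qh I hright (x i k) * qh I hright (v k)
            = qh I hright (x.mulVec v i) by
          simp [Matrix.mulVec, dotProduct, map_sum]]
        exact ((qh_eq_iff I hright).2 (hfix v hv i)).symm
      exact hle hy
    have hφim : ∀ w, φ w ∈ p := by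
      intro w
      have : φ w = ∑ k, op (w k) • (fun i => qh I hright (x i k)) := by
        funext i
        show ∑ k, qh I hright (x i k) * w k = _
        simp [Finset.sum_apply, op_smul_eq_mul]
      rw [this]
      exact Submodule.sum_mem _ fun k _ =>
        Submodule.smul_mem _ _ (Submodule.subset_span ⟨fun i => x i k, hcol k, rfl⟩)
    have hker : p ≤ LinearMap.ker (LinearMap.id - φ) := by
      intro y hy
      rw [LinearMap.mem_ker, LinearMap.sub_apply, LinearMap.id_apply, hφfix y hy, sub_self]
    set σ := Submodule.liftQ p (LinearMap.id - φ) hker with hσ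
    refine Module.Projective.of_split σ p.mkQ ?_
    refine Submodule.linearMap_qext _ (LinearMap.ext fun w => ?_)
    show p.mkQ (σ (Submodule.Quotient.mk w)) = Submodule.Quotient.mk w
    rw [hσ, Submodule.liftQ_apply, LinearMap.sub_apply, LinearMap.id_apply, map_sub,
      Submodule.mkQ_apply, Submodule.mkQ_apply, (Submodule.Quotient.mk_eq_zero p).2 (hφim w),
      sub_zero]
  · intro hP
    set p := Submodule.span (idealCon A I hright).Quotientᵐᵒᵖ (Kset I hright n K) with hp
    obtain ⟨σ, hσ⟩ := Module.projective_lifting_property p.mkQ LinearMap.id p.mkQ_surjective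
    set φ : (Fin n → (idealCon A I hright).Quotient) →ₗ[(idealCon A I hright).Quotientᵐᵒᵖ]
        (Fin n → (idealCon A I hright).Quotient) := LinearMap.id - σ ∘ₗ p.mkQ with hφ
    have hφmem : ∀ w, φ w ∈ p := by
      intro w
      rw [← p.ker_mkQ, LinearMap.mem_ker]
      rw [hφ]
      simp only [LinearMap.sub_apply, LinearMap.id_apply, LinearMap.comp_apply, map_sub]
      have : p.mkQ (σ (p.mkQ w)) = p.mkQ w := by
        have := LinearMap.congr_fun hσ (p.mkQ w)
        simpa using this
      rw [this, sub_self]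
    have hφfix : ∀ y ∈ p, φ y = y := by
      intro y hy
      rw [hφ]
      simp only [LinearMap.sub_apply, LinearMap.id_apply, LinearMap.comp_apply]
      rw [show p.mkQ y = 0 from (Submodule.Quotient.mk_eq_zero p).2 hy, map_zero, sub_zero]
    have h3 : ∀ k : Fin n, ∃ v ∈ K, φ (Pi.single k 1) = fun i => qh I hright (v i) := by
      intro k
      have : φ (Pi.single k 1) ∈ Ksub I hright n K := by
        rw [← span_Kset]; exact hφmem _
      obtain ⟨v, hv, heq⟩ := this
      exact ⟨v, hv, heq⟩
    choose v hvK hveq using h3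
    refine ⟨Matrix.of fun i k => v k i, fun k => hvK k, ?_⟩
    intro w hw i
    rw [← qh_eq_iff I hright]
    have hsingle : (fun i => qh I hright (w i))
        = ∑ k, op (qh I hright (w k)) • (Pi.single k 1 : Fin n → (idealCon A I hright).Quotient) := by
      funext j
      rw [Finset.sum_apply]
      simp only [Pi.smul_apply, Pi.single_apply, op_smul_eq_mul, ite_mul, one_mul, zero_mul]
      rw [Finset.sum_ite_eq]
      simp
    have hfixw : φ (fun i => qh I hright (w i)) = fun i => qh I hright (w i) :=
      hφfix _ (Submodule.subset_span ⟨w, hw, rfl⟩)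
    have hmv : qh I hright ((Matrix.of fun i k => v k i).mulVec w i) = qh I hright (w i) := by
      have expand : qh I hright ((Matrix.of fun i k => v k i).mulVec w i)
          = (∑ k, op (qh I hright (w k)) • φ (Pi.single k 1)) i := by
        rw [Finset.sum_apply]
        show qh I hright (∑ k, v k i * w k) = _
        rw [map_sum]
        refine Finset.sum_congr rfl fun k _ => ?_
        rw [map_mul]
        have := congr_fun (hveq k) i
        rw [Pi.smul_apply, op_smul_eq_mul, this]
      rw [expand]
      have : (∑ k, op (qh I hright (w k)) • φ (Pi.single k 1))
          = φ (∑ k, op (qh I hright (w k)) • (Pi.single k 1 : Fin n → (idealCon A I hright).Quotient)) := by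
        rw [map_sum]
        refine Finset.sum_congr rfl fun k _ => ?_
        rw [map_smul]
      rw [this, ← hsingle, hfixw]
    exact hmv.symm







/-- The matrix with `v` in column `j₀` and zeros elsewhere. -/
def Cmat (n : ℕ) (j₀ : Fin n) (v : Fin n → A) : Matrix (Fin n) (Fin n) A :=
  Matrix.of fun i j => if j = j₀ then v i else 0

lemma Cmat_mul (n : ℕ) (j₀ : Fin n) (v : Fin n → A) (y : Matrix (Fin n) (Fin n) A) :
    Cmat n j₀ v * y = Matrix.of fun i j => v i * y j₀ j := by
  funext i j
  show ∑ k, (if k = j₀ then v i else 0) * y k j = v i * y j₀ j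
  simp [ite_mul, Finset.sum_ite_eq']

lemma mul_col (n : ℕ) (x y : Matrix (Fin n) (Fin n) A) (j : Fin n) :
    (fun i => (x * y) i j) = ∑ k, op (y k j) • (fun i => x i k) := by
  funext i
  rw [Finset.sum_apply]
  simp [Matrix.mul_apply, op_smul_eq_mul]




end Aux13

/-- for a two-sided idempotent ideal `I` of `A` the following are
equivalent:
(1) for every `n > 0` and every `Mₙ(I)`-saturated right ideal `𝔞` of the matrix ring
`Mₙ(A)`, there is `x ∈ 𝔞` with `(1ₙ - x)·𝔞 ⊆ Mₙ(I)`;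
(2) for every `n > 0` and every `I`-saturated submodule `K` of the free right `A`-module
`Aⁿ`, the quotient `Aⁿ/(K + Iⁿ)` (realized as the quotient of `(A/I)ⁿ` by the image of
`K`) is projective as a right `A/I`-module. -/
theorem stmt_13 (I : Ideal A)
    (hright : ∀ a ∈ I, ∀ b : A, a * b ∈ I)
    (hidem : ∀ a ∈ I, a ∈ AddSubgroup.closure {x : A | ∃ b ∈ I, ∃ c ∈ I, x = b * c}) :
    (∀ n : ℕ, 0 < n →
      ∀ 𝔞 : Submodule (Matrix (Fin n) (Fin n) A)ᵐᵒᵖ (Matrix (Fin n) (Fin n) A),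
        (∀ x : Matrix (Fin n) (Fin n) A,
          (∀ y : Matrix (Fin n) (Fin n) A, (∀ i j, y i j ∈ I) → op y • x ∈ 𝔞) → x ∈ 𝔞) →
        ∃ x ∈ 𝔞, ∀ z ∈ 𝔞, ∀ i j, ((1 - x) * z) i j ∈ I)
    ↔
    (∀ n : ℕ, 0 < n →
      ∀ K : Submodule Aᵐᵒᵖ (Fin n → A),
        (∀ x : Fin n → A, (∀ a ∈ I, op a • x ∈ K) → x ∈ K) →
        Module.Projective (idealCon A I hright).Quotientᵐᵒᵖ
          ((Fin n → (idealCon A I hright).Quotient) ⧸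
            Submodule.span (idealCon A I hright).Quotientᵐᵒᵖ
              {y : Fin n → (idealCon A I hright).Quotient |
                ∃ x ∈ K, y = fun i => RingCon.mk' (idealCon A I hright) (x i)})) := by
  constructor
  · -- (1) → (2)
    intro h1 n hn K hKsat
    have hj₀ : (0 : ℕ) < n := hn
    set j₀ : Fin n := ⟨0, hn⟩ with hj
    -- the right ideal of matrices all of whose columns lie in K
    set 𝔞 : Submodule (Matrix (Fin n) (Fin n) A)ᵐᵒᵖ (Matrix (Fin n) (Fin n) A) :=
      { carrier := {x | ∀ k, (fun i => x i k) ∈ K}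
        zero_mem' := by intro k; exact K.zero_mem
        add_mem' := by
          intro x y hx hy k
          have : (fun i => (x + y) i k) = (fun i => x i k) + fun i => y i k := rfl
          rw [this]
          exact K.add_mem (hx k) (hy k)
        smul_mem' := by
          intro c x hx k
          have hc : c • x = x * unop c := by rw [← op_unop c, op_smul_eq_mul, unop_op]
          rw [hc, mul_col]
          exact Submodule.sum_mem _ fun p _ => K.smul_mem _ (hx p) } with h𝔞
    have hsat : ∀ x : Matrix (Fin n) (Fin n) A,
        (∀ y : Matrix (Fin n) (Fin n) A, (∀ i j, y i j ∈ I) → op y • x ∈ 𝔞) → x ∈ 𝔞 := by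
      intro x hx k
      refine hKsat _ fun a ha => ?_
      have hy : ∀ i j, (Matrix.of fun p _ => if p = k then a else 0 :
          Matrix (Fin n) (Fin n) A) i j ∈ I := by
        intro i j
        by_cases h : i = k <;> simp [h, ha, I.zero_mem]
      have hmem := hx _ hy
      rw [op_smul_eq_mul] at hmem
      have hcol := hmem j₀
      have : (fun i => (x * Matrix.of fun p _ => if p = k then a else 0) i j₀)
          = op a • fun i => x i k := by
        funext i
        show ∑ p, x i p * (if p = k then a else 0) = _
        simp [mul_ite, Finset.sum_ite_eq', op_smul_eq_mul]
      rwa [this] at hcol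
    obtain ⟨x, hx𝔞, hxI⟩ := h1 n hn 𝔞 hsat
    refine (key I hright n K).1 ⟨x, hx𝔞, ?_⟩
    intro v hv i
    have hC : Cmat n j₀ v ∈ 𝔞 := by
      intro k
      by_cases h : k = j₀
      · have : (fun i => Cmat n j₀ v i k) = v := by funext i; simp [Cmat, h]
        rw [this]; exact hv
      · have : (fun i => Cmat n j₀ v i k) = 0 := by funext i; simp [Cmat, h]
        rw [this]; exact K.zero_mem
    have := hxI _ hC i j₀
    have heq : ((1 - x) * Cmat n j₀ v) i j₀ = v i - x.mulVec v i := by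
      show ∑ k, (1 - x) i k * (if j₀ = j₀ then v k else 0) = _
      have h1' : ∀ k, (1 - x) i k * (if j₀ = j₀ then v k else 0)
          = (if i = k then v k else 0) - x i k * v k := by
        intro k
        simp [Matrix.sub_apply, Matrix.one_apply, sub_mul, ite_mul]
      rw [Finset.sum_congr rfl fun k _ => h1' k, Finset.sum_sub_distrib,
        Finset.sum_ite_eq]
      simp [Matrix.mulVec, dotProduct]
    rwa [heq] at this
  · -- (2) → (1)
    intro h2 n hn 𝔞 hsat
    set j₀ : Fin n := ⟨0, hn⟩ with hj
    -- D-matrix membership helper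
    have hD : ∀ w : Fin n → A, Cmat n j₀ w ∈ 𝔞 → ∀ j' : Fin n,
        (Matrix.of fun i j => if j = j' then w i else 0) ∈ 𝔞 := by
      intro w hw j'
      have heq : (Matrix.of fun i j => if j = j' then w i else 0 : Matrix (Fin n) (Fin n) A)
          = op (Matrix.of fun p q => if p = j₀ ∧ q = j' then (1 : A) else 0) • Cmat n j₀ w := by
        rw [op_smul_eq_mul, Cmat_mul]
        funext i j
        show (if j = j' then w i else 0) = w i * (if j₀ = j₀ ∧ j = j' then 1 else 0)
        by_cases h : j = j' <;> simp [h]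
      rw [heq]
      exact 𝔞.smul_mem _ hw
    set K : Submodule Aᵐᵒᵖ (Fin n → A) :=
      { carrier := {v | Cmat n j₀ v ∈ 𝔞}
        zero_mem' := by
          show Cmat n j₀ 0 ∈ 𝔞
          have : Cmat n j₀ (0 : Fin n → A) = 0 := by
            funext i j; simp [Cmat]
          rw [this]; exact 𝔞.zero_mem
        add_mem' := by
          intro v w hv hw
          show Cmat n j₀ (v + w) ∈ 𝔞
          have : Cmat n j₀ (v + w) = Cmat n j₀ v + Cmat n j₀ w := by
            funext i j
            by_cases h : j = j₀ <;> simp [Cmat, h]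
          rw [this]; exact 𝔞.add_mem hv hw
        smul_mem' := by
          intro c v hv
          show Cmat n j₀ (c • v) ∈ 𝔞
          have : Cmat n j₀ (c • v)
              = op (Matrix.of fun p q => if p = j₀ ∧ q = j₀ then unop c else 0) • Cmat n j₀ v := by
            rw [op_smul_eq_mul, Cmat_mul]
            funext i j
            show (if j = j₀ then (c • v) i else 0) = v i * (if j₀ = j₀ ∧ j = j₀ then unop c else 0)
            by_cases h : j = j₀ <;> simp [h, MulOpposite.smul_eq_mul_unop]
          rw [this]
          exact 𝔞.smul_mem _ hv } with hK
    have hKsat : ∀ v : Fin n → A, (∀ a ∈ I, op a • v ∈ K) → v ∈ K := by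
      intro v hv
      show Cmat n j₀ v ∈ 𝔞
      refine hsat _ fun y hy => ?_
      rw [op_smul_eq_mul, Cmat_mul]
      have : (Matrix.of fun i j => v i * y j₀ j)
          = ∑ j' : Fin n, (Matrix.of fun i j => if j = j' then (op (y j₀ j') • v) i else 0 :
            Matrix (Fin n) (Fin n) A) := by
        funext i j
        rw [show (∑ j' : Fin n, (Matrix.of fun i j => if j = j' then (op (y j₀ j') • v) i else 0 :
            Matrix (Fin n) (Fin n) A)) i j
          = ∑ j' : Fin n, (if j = j' then (op (y j₀ j') • v) i else 0) from by
            rw [Matrix.sum_apply]; rfl]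
        simp [Finset.sum_ite_eq', op_smul_eq_mul]
      rw [this]
      exact Submodule.sum_mem _ fun j' _ => hD _ (hv _ (hy j₀ j')) j'
    have hcolK : ∀ x ∈ 𝔞, ∀ k : Fin n, (fun i => x i k) ∈ K := by
      intro x hx k
      show Cmat n j₀ (fun i => x i k) ∈ 𝔞
      have : Cmat n j₀ (fun i => x i k)
          = op (Matrix.of fun p q => if p = k ∧ q = j₀ then (1 : A) else 0) • x := by
        rw [op_smul_eq_mul]
        funext i j
        show (if j = j₀ then x i k else 0) = ∑ p, x i p * (if p = k ∧ j = j₀ then 1 else 0)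
        by_cases h : j = j₀ <;> simp [h, ite_and, mul_ite, Finset.sum_ite_eq']
      rw [this]
      exact 𝔞.smul_mem _ hx
    have hKcol : ∀ x : Matrix (Fin n) (Fin n) A, (∀ k : Fin n, (fun i => x i k) ∈ K) → x ∈ 𝔞 := by
      intro x hx
      have : x = ∑ k : Fin n, (Matrix.of fun i j => if j = k then x i k else 0 :
          Matrix (Fin n) (Fin n) A) := by
        funext i j
        rw [show (∑ k : Fin n, (Matrix.of fun i j => if j = k then x i k else 0 :
            Matrix (Fin n) (Fin n) A)) i j = ∑ k : Fin n, (if j = k then x i k else 0) from by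
          rw [Matrix.sum_apply]; rfl]
        simp [Finset.sum_ite_eq']
      rw [this]
      exact Submodule.sum_mem _ fun k _ => hD _ (hx k) k
    have hproj := h2 n hn K hKsat
    obtain ⟨x, hcols, hfix⟩ := (key I hright n K).2 hproj
    refine ⟨x, hKcol x hcols, ?_⟩
    intro z hz i j
    have hcol := hcolK z hz j
    have hfj := hfix _ hcol i
    have heq : ((1 - x) * z) i j = z i j - x.mulVec (fun i' => z i' j) i := by
      show ∑ k, (1 - x) i k * z k j = _
      have h1' : ∀ k, (1 - x) i k * z k j
          = (if i = k then z k j else 0) - x i k * z k j := by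
        intro k
        simp [Matrix.sub_apply, Matrix.one_apply, sub_mul, ite_mul]
      rw [Finset.sum_congr rfl fun k _ => h1' k, Finset.sum_sub_distrib, Finset.sum_ite_eq]
      simp [Matrix.mulVec, dotProduct]
    rw [heq]
    exact hfj
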